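/- arXiv:0906.1859 — 3 statements merged into one kernel-verified Lean document; each statement's English description precedes it below -/
import Mathlib

section
/- For the three-parameter logistic model with fixed a > 0 and c ∈ [0,1), the Fisher information I(θ|a,b,c) = (1-c)a²e^{2a(θ-b)}/([c+e^{a(θ-b)}][1+e^{a(θ-b)}]²), viewed as a function of b, attains its maximum at b = θ - (1/a)·log((1+√(1+8c))/2). -/
/-- For the 3-PL model with fixed `a > 0` and `c ∈ [0,1)`, the Fisher information as a
function of `b` attains its maximum at `b = θ - (1/a)·log((1+√(1+8c))/2)`. -/
theorem threePL_info_max (θ a c : ℝ) (ha : 0 < a) (hc0 : 0 ≤ c) (hc1 : c < 1) :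
    ∀ b : ℝ,
      (1 - c) * a ^ 2 * Real.exp (2 * (a * (θ - b))) /
        ((c + Real.exp (a * (θ - b))) * (1 + Real.exp (a * (θ - b))) ^ 2) ≤
      (1 - c) * a ^ 2 *
          Real.exp (2 * (a * (θ - (θ - (1 / a) * Real.log ((1 + Real.sqrt (1 + 8 * c)) / 2))))) /
        ((c + Real.exp (a * (θ - (θ - (1 / a) * Real.log ((1 + Real.sqrt (1 + 8 * c)) / 2))))) *
          (1 + Real.exp (a * (θ - (θ - (1 / a) * Real.log ((1 + Real.sqrt (1 + 8 * c)) / 2))))) ^ 2) := by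
  intro b
  set s := Real.sqrt (1 + 8 * c) with hs
  have hs0 : 1 ≤ s := by
    have h1 : Real.sqrt 1 ≤ s := Real.sqrt_le_sqrt (by linarith)
    simpa using h1
  have hs2 : s ^ 2 = 1 + 8 * c := Real.sq_sqrt (by linarith)
  set m : ℝ := (1 + s) / 2 with hm
  have hm1 : 1 ≤ m := by rw [hm]; linarith
  have hm0 : 0 < m := by linarith
  have hmeq : m ^ 2 = m + 2 * c := by
    rw [hm]; ring_nf; nlinarith [hs2]
  have hexp : a * (θ - (θ - 1 / a * Real.log m)) = Real.log m := by
    field_simp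
    ring
  rw [hexp, Real.exp_log hm0]
  have h2 : Real.exp (2 * Real.log m) = m ^ 2 := by
    rw [two_mul, Real.exp_add, Real.exp_log hm0]; ring
  rw [h2]
  set x := Real.exp (a * (θ - b)) with hx
  have hx0 : 0 < x := Real.exp_pos _
  have hx2 : Real.exp (2 * (a * (θ - b))) = x ^ 2 := by
    rw [two_mul, Real.exp_add]; ring
  rw [hx2]
  have hd1 : 0 < (c + x) * (1 + x) ^ 2 := mul_pos (by linarith) (pow_pos (by linarith) 2)
  have hd2 : 0 < (c + m) * (1 + m) ^ 2 := mul_pos (by linarith) (pow_pos (by linarith) 2)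
  have hca : 0 ≤ (1 - c) * a ^ 2 := mul_nonneg (by linarith) (sq_nonneg a)
  rw [div_le_div_iff₀ hd1 hd2]
  have hnn : (0:ℝ) ≤ m ^ 2 * x + c :=
    add_nonneg (mul_nonneg (sq_nonneg m) hx0.le) hc0
  have ident : m ^ 2 * ((c + x) * (1 + x) ^ 2) - x ^ 2 * ((c + m) * (1 + m) ^ 2)
      = (x - m) ^ 2 * (m ^ 2 * x + c) := by
    linear_combination ((m + 1) * (x ^ 2 - m * x)) * hmeq
  have key : x ^ 2 * ((c + m) * (1 + m) ^ 2) ≤ m ^ 2 * ((c + x) * (1 + x) ^ 2) := by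
    nlinarith [mul_nonneg (sq_nonneg (x - m)) hnn, ident]
  nlinarith [mul_le_mul_of_nonneg_left key hca]
end

section
/- Let G(t) = e^t/(1+e^t). For fixed θ and a ∈ [m,M] (0 < m ≤ M), there exist constants 0 < C₁ ≤ C₂ < ∞ depending only on m, M, δ₀ such that for all b ≤ θ + δ₀/m and all θ̂ ≥ θ + 1: C₁·G(a(θ-b))(1-G(a(θ-b))) ≤ G(a(θ̂-b)) - G(a(θ-b)) ≤ C₂·G(a(θ-b))(1-G(a(θ-b)))·e^{a(θ̂-θ)}. -/
/-- For `a ∈ [m,M]`, `b ≤ θ + δ₀/m`, `θ̂ ≥ θ + 1`, there are constants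
`0 < C₁ ≤ C₂ < ∞` depending only on `m, M, δ₀` such that
`C₁·G(a(θ-b))(1-G(a(θ-b))) ≤ G(a(θ̂-b)) - G(a(θ-b)) ≤
 C₂·G(a(θ-b))(1-G(a(θ-b)))·e^{a(θ̂-θ)}`, where `G(t) = e^t/(1+e^t)`. -/
theorem logistic_gap_same_order (m M δ₀ : ℝ) (hm : 0 < m) (hmM : m ≤ M) (hδ : 0 < δ₀) :
    ∃ C₁ C₂ : ℝ, 0 < C₁ ∧ C₁ ≤ C₂ ∧
      ∀ θ a b θhat : ℝ, a ∈ Set.Icc m M → b ≤ θ + δ₀ / m → θ + 1 ≤ θhat →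
        C₁ * ((Real.exp (a * (θ - b)) / (1 + Real.exp (a * (θ - b)))) *
            (1 - Real.exp (a * (θ - b)) / (1 + Real.exp (a * (θ - b))))) ≤
          Real.exp (a * (θhat - b)) / (1 + Real.exp (a * (θhat - b))) -
            Real.exp (a * (θ - b)) / (1 + Real.exp (a * (θ - b))) ∧
        Real.exp (a * (θhat - b)) / (1 + Real.exp (a * (θhat - b))) -
            Real.exp (a * (θ - b)) / (1 + Real.exp (a * (θ - b))) ≤
          C₂ * ((Real.exp (a * (θ - b)) / (1 + Real.exp (a * (θ - b)))) *
              (1 - Real.exp (a * (θ - b)) / (1 + Real.exp (a * (θ - b))))) *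
            Real.exp (a * (θhat - θ)) := by
  refine ⟨1 - Real.exp (-m), 1, ?_, ?_, ?_⟩
  · have h1 : Real.exp (-m) < 1 := by
      rw [Real.exp_lt_one_iff]; linarith
    linarith
  · have h1 : 0 < Real.exp (-m) := Real.exp_pos _
    linarith
  · intro θ a b θhat ha hb hθ
    obtain ⟨ham, haM⟩ := ha
    set s := Real.exp (-m) with hs_def
    set u := Real.exp (a * (θ - b)) with hu_def
    set E := Real.exp (a * (θhat - θ)) with hE_def
    have hu : 0 < u := Real.exp_pos _
    have hEpos : 0 < E := Real.exp_pos _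
    have hv : Real.exp (a * (θhat - b)) = u * E := by
      rw [hu_def, hE_def, ← Real.exp_add]; ring_nf
    have hma : 0 < a := lt_of_lt_of_le hm ham
    have hmE : Real.exp m ≤ E := by
      apply Real.exp_le_exp.mpr
      nlinarith
    have hs : s * Real.exp m = 1 := by
      rw [hs_def, ← Real.exp_add]; simp
    have hsm : 0 < s := Real.exp_pos _
    have hem : 1 ≤ Real.exp m := Real.one_le_exp hm.le
    have hE1 : 1 ≤ E := le_trans hem hmE
    have hsE : 1 ≤ s * E := by
      calc 1 = s * Real.exp m := hs.symm
        _ ≤ s * E := by nlinarith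
    have h2 : 2 ≤ E + s := by nlinarith [sq_nonneg (Real.exp m - 1)]
    have h1u : (0:ℝ) < 1 + u := by linarith
    have h1v : (0:ℝ) < 1 + u * E := by positivity
    rw [hv]
    constructor
    · have keyineq : (1 - s) * u * (1 + u * E) ≤ (u * E - u) * (1 + u) := by
        nlinarith [mul_nonneg hu.le (sub_nonneg.2 h2),
          mul_nonneg (mul_nonneg hu.le hu.le) (sub_nonneg.2 hsE)]
      rw [div_sub_div _ _ h1v.ne' h1u.ne',
        show (1 - s) * (u / (1 + u) * (1 - u / (1 + u)))
          = ((1 - s) * u) / ((1 + u) * (1 + u)) from by field_simp; ring,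
        div_le_div_iff₀ (by positivity) (by positivity)]
      nlinarith [mul_le_mul_of_nonneg_right keyineq h1u.le]
    · have keyineq : (u * E - u) * (1 + u) ≤ u * E * (1 + u * E) := by
        nlinarith [mul_nonneg (mul_nonneg (mul_nonneg hu.le hu.le) hEpos.le)
          (sub_nonneg.2 hE1)]
      rw [div_sub_div _ _ h1v.ne' h1u.ne',
        show 1 * (u / (1 + u) * (1 - u / (1 + u))) * E
          = (u * E) / ((1 + u) * (1 + u)) from by field_simp; ring,
        div_le_div_iff₀ (by positivity) (by positivity)]
      nlinarith [mul_le_mul_of_nonneg_right keyineq h1u.le]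
end

section
/- Let θ̂₀ < θ - 1 - π²/6, ε₀ > 0, and n₀ ∈ ℕ satisfy: (i) Σ_{k=n₀+1}^∞ k³/(1+e^k) < 1/3, (ii) (n₀+1)³/(1+e^{(n₀+1)³ε₀}) < 1/6, (iii) 3(n₀+1)³ < Σ_{k=1}^{n₀} k³. Set θ̂_k = θ̂₀ - kε₀ for 1 ≤ k ≤ n₀ and b_k = θ̂_{k-1}, a_k = k³. If θ̂_{n₀+1} solves Σ_{k=1}^{n₀+1} a_k(Y_k - G(a_k(θ̂-b_k))) = 0 with Y_k = 0 for k ≤ n₀ and Y_{n₀+1} = 1, then θ̂_{n₀+1} ≤ θ̂₀. -/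
lemma G_half {x : ℝ} (hx : 0 ≤ x) :
    (1 : ℝ) / 2 ≤ Real.exp x / (1 + Real.exp x) := by
  have h1 : (1 : ℝ) ≤ Real.exp x := Real.one_le_exp hx
  have h2 : (0 : ℝ) < 1 + Real.exp x := by positivity
  rw [le_div_iff₀ h2]; nlinarith

lemma G_lt_one (x : ℝ) : Real.exp x / (1 + Real.exp x) < 1 := by
  have h2 : (0 : ℝ) < 1 + Real.exp x := by positivity
  rw [div_lt_one h2]; linarith

/-- First step of the inconsistency counterexample (Example 1): under the adaptive
2-PL design with `a_k = k³`, `b_k = θ̂_{k-1}`, initial estimators decreasing by `ε₀`,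
responses `Y_k = 0` for `k ≤ n₀` and `Y_{n₀+1} = 1`, any solution `θ̂_{n₀+1}` of the
likelihood equation satisfies `θ̂_{n₀+1} ≤ θ̂₀`. -/
theorem example1_first_step (θ ε₀ : ℝ) (n₀ : ℕ) (θhat : ℕ → ℝ)
    (hε : 0 < ε₀) (hinit : θhat 0 < θ - 1 - Real.pi ^ 2 / 6)
    (hdec : ∀ k, 1 ≤ k → k ≤ n₀ → θhat k = θhat 0 - k * ε₀)
    (h36 : ∑' k : ℕ, ((n₀ + 1 + k : ℝ) ^ 3 / (1 + Real.exp (n₀ + 1 + k))) < 1 / 3)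
    (h37 : ((n₀ : ℝ) + 1) ^ 3 / (1 + Real.exp (((n₀ : ℝ) + 1) ^ 3 * ε₀)) < 1 / 6)
    (h38 : 3 * ((n₀ : ℝ) + 1) ^ 3 < ∑ k ∈ Finset.Icc 1 n₀, (k : ℝ) ^ 3)
    (hml : ∑ k ∈ Finset.Icc 1 (n₀ + 1),
        (k : ℝ) ^ 3 * ((if k = n₀ + 1 then (1 : ℝ) else 0) -
          Real.exp ((k : ℝ) ^ 3 * (θhat (n₀ + 1) - θhat (k - 1))) /
            (1 + Real.exp ((k : ℝ) ^ 3 * (θhat (n₀ + 1) - θhat (k - 1))))) = 0) :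
    θhat (n₀ + 1) ≤ θhat 0 := by
  by_contra hc
  push_neg at hc
  -- split off the top term
  rw [Finset.sum_Icc_succ_top (Nat.le_add_left 1 n₀)] at hml
  set G : ℕ → ℝ := fun k =>
    Real.exp ((k : ℝ) ^ 3 * (θhat (n₀ + 1) - θhat (k - 1))) /
      (1 + Real.exp ((k : ℝ) ^ 3 * (θhat (n₀ + 1) - θhat (k - 1)))) with hG
  have hfirst : ∑ k ∈ Finset.Icc 1 n₀,
      (k : ℝ) ^ 3 * ((if k = n₀ + 1 then (1 : ℝ) else 0) - G k)
      = -∑ k ∈ Finset.Icc 1 n₀, (k : ℝ) ^ 3 * G k := by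
    rw [← Finset.sum_neg_distrib]
    apply Finset.sum_congr rfl
    intro k hk
    have hne : k ≠ n₀ + 1 := by
      have := (Finset.mem_Icc.mp hk).2; omega
    rw [if_neg hne]; ring
  rw [if_pos rfl] at hml
  rw [hfirst] at hml
  -- each early term has G k ≥ 1/2
  have hGk : ∀ k ∈ Finset.Icc 1 n₀, (1 : ℝ) / 2 ≤ G k := by
    intro k hk
    obtain ⟨hk1, hk2⟩ := Finset.mem_Icc.mp hk
    have hθ : θhat (k - 1) ≤ θhat 0 := by
      rcases Nat.eq_or_lt_of_le hk1 with h | h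
      · simp [← h]
      · have h1 : 1 ≤ k - 1 := by omega
        have h2 : k - 1 ≤ n₀ := by omega
        rw [hdec (k - 1) h1 h2]
        have : (0 : ℝ) ≤ ((k - 1 : ℕ) : ℝ) * ε₀ := by positivity
        linarith
    have hx : 0 ≤ (k : ℝ) ^ 3 * (θhat (n₀ + 1) - θhat (k - 1)) := by
      have : (0 : ℝ) ≤ (k : ℝ) ^ 3 := by positivity
      nlinarith
    exact G_half hx
  have hsum : (1 : ℝ) / 2 * ∑ k ∈ Finset.Icc 1 n₀, (k : ℝ) ^ 3
      ≤ ∑ k ∈ Finset.Icc 1 n₀, (k : ℝ) ^ 3 * G k := by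
    rw [Finset.mul_sum]
    apply Finset.sum_le_sum
    intro k hk
    have hk3 : (0 : ℝ) ≤ (k : ℝ) ^ 3 := by positivity
    have := hGk k hk
    nlinarith
  have htop : ((n₀ + 1 : ℕ) : ℝ) ^ 3 * (1 - G (n₀ + 1)) ≤ ((n₀ : ℝ) + 1) ^ 3 := by
    push_cast
    have h1 : (0 : ℝ) ≤ ((n₀ : ℝ) + 1) ^ 3 := by positivity
    have h2 : 0 < G (n₀ + 1) := by
      rw [hG]; positivity
    nlinarith
  have hpos : (0 : ℝ) < ((n₀ : ℝ) + 1) ^ 3 := by positivity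
  linarith
end
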